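/- Let s ≥ 2 be an integer and let g : ℝ → ℝ satisfy: for every admissible digit sequence a, g(∑_{n=0}^∞ a n / s^{n+1}) = ∑_{n=0}^∞ (−1)^{n+1} a n / s^{n+1}. Then the graph of g over [0,1), i.e. the set { p : ℝ × ℝ | ∃ x ∈ [0,1), p = (x, g x) }, has Hausdorff dimension equal to 1. (Paper's Theorem 3 for the function f₊.) -/

import Mathlib

open scoped ENNReal

namespace Stmt16Aux

variable {s : ℕ}

/-- The `n`-th digit of `x` in base `s`. -/
noncomputable def dig (s : ℕ) (x : ℝ) (n : ℕ) : ℕ :=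
  (⌊(s : ℝ) ^ (n + 1) * x⌋ - s * ⌊(s : ℝ) ^ n * x⌋).toNat

lemma floor_mul_le (hs : 2 ≤ s) (y : ℝ) :
    (s : ℤ) * ⌊y⌋ ≤ ⌊(s : ℝ) * y⌋ ∧ ⌊(s : ℝ) * y⌋ ≤ s * ⌊y⌋ + (s - 1) := by
  have hs0 : (0 : ℝ) < s := by positivity
  constructor
  · apply Int.le_floor.2
    push_cast
    exact mul_le_mul_of_nonneg_left (Int.floor_le y) hs0.le
  · have h1 : (s : ℝ) * y < ((s * ⌊y⌋ + s : ℤ) : ℝ) := by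
      push_cast
      have := Int.lt_floor_add_one y
      nlinarith
    have := Int.floor_lt.2 h1
    omega

lemma dig_cast (hs : 2 ≤ s) (x : ℝ) (n : ℕ) :
    (dig s x n : ℝ) = (⌊(s : ℝ) ^ (n + 1) * x⌋ : ℝ) - s * (⌊(s : ℝ) ^ n * x⌋ : ℝ) := by
  have h := floor_mul_le hs ((s : ℝ) ^ n * x)
  rw [← mul_assoc, ← pow_succ'] at h
  have h0 : (0 : ℤ) ≤ ⌊(s : ℝ) ^ (n + 1) * x⌋ - s * ⌊(s : ℝ) ^ n * x⌋ := by omega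
  rw [dig]
  exact_mod_cast Int.toNat_of_nonneg h0

lemma dig_le (hs : 2 ≤ s) (x : ℝ) (n : ℕ) : dig s x n ≤ s - 1 := by
  have h := floor_mul_le hs ((s : ℝ) ^ n * x)
  rw [← mul_assoc, ← pow_succ'] at h
  rw [dig]
  omega

lemma dig_partial_sum (hs : 2 ≤ s) (x : ℝ) (k : ℕ) :
    ∑ n ∈ Finset.range k, (dig s x n : ℝ) / (s : ℝ) ^ (n + 1)
      = (⌊(s : ℝ) ^ k * x⌋ : ℝ) / (s : ℝ) ^ k - (⌊x⌋ : ℝ) := by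
  have hs0 : (0 : ℝ) < s := by positivity
  have key : ∀ n, (dig s x n : ℝ) / (s : ℝ) ^ (n + 1)
      = (⌊(s : ℝ) ^ (n+1) * x⌋ : ℝ) / (s : ℝ) ^ (n+1) - (⌊(s : ℝ) ^ n * x⌋ : ℝ) / (s : ℝ) ^ n := by
    intro n
    rw [dig_cast hs]
    field_simp
    ring
  calc ∑ n ∈ Finset.range k, (dig s x n : ℝ) / (s : ℝ) ^ (n + 1)
      = ∑ n ∈ Finset.range k, ((⌊(s : ℝ) ^ (n+1) * x⌋ : ℝ) / (s : ℝ) ^ (n+1)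
          - (⌊(s : ℝ) ^ n * x⌋ : ℝ) / (s : ℝ) ^ n) := by
        exact Finset.sum_congr rfl fun n _ => key n
    _ = (⌊(s : ℝ) ^ k * x⌋ : ℝ) / (s : ℝ) ^ k - (⌊(s : ℝ) ^ 0 * x⌋ : ℝ) / (s : ℝ) ^ 0 :=
        Finset.sum_range_sub (fun n => (⌊(s : ℝ) ^ n * x⌋ : ℝ) / (s : ℝ) ^ n) k
    _ = (⌊(s : ℝ) ^ k * x⌋ : ℝ) / (s : ℝ) ^ k - (⌊x⌋ : ℝ) := by norm_num


lemma term_eq (hs : 2 ≤ s) (C : ℝ) (m n : ℕ) :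
    C / (s : ℝ) ^ (m + 1) * ((1 : ℝ) / s) ^ n = C / (s : ℝ) ^ (n + m + 1) := by
  have hs0 : (0 : ℝ) < s := by positivity
  rw [div_pow, one_pow, div_mul_div_comm, mul_one]
  congr 1
  rw [← pow_add]
  ring_nf

lemma summable_aux (hs : 2 ≤ s) (c : ℕ → ℝ) (hc : ∀ n, |c n| ≤ (s : ℝ) - 1) :
    Summable fun n => c n / (s : ℝ) ^ (n + 1) := by
  have hs0 : (0 : ℝ) < s := by positivity
  have hr0 : (0 : ℝ) ≤ 1 / s := by positivity
  have hr1 : (1 : ℝ) / s < 1 := by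
    rw [div_lt_one hs0]; exact_mod_cast by omega
  refine Summable.of_norm_bounded
    (g := fun n => (((s : ℝ) - 1) / (s : ℝ) ^ (0 + 1)) * ((1 : ℝ) / s) ^ n)
    ((summable_geometric_of_lt_one hr0 hr1).mul_left _) (fun n => ?_)
  show ‖c n / (s : ℝ) ^ (n + 1)‖ ≤ ((s : ℝ) - 1) / (s : ℝ) ^ (0 + 1) * ((1 : ℝ) / s) ^ n
  rw [term_eq hs, Real.norm_eq_abs, abs_div,
    abs_of_pos (show (0:ℝ) < (s:ℝ) ^ (n+0+1) by positivity),
    show n + 0 + 1 = n + 1 from by omega]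
  gcongr
  exact hc n

lemma tail_bound (hs : 2 ≤ s) (c : ℕ → ℝ) (hc : ∀ n, |c n| ≤ (s : ℝ) - 1) (k : ℕ) :
    |∑' n : ℕ, c (n + k) / (s : ℝ) ^ (n + k + 1)| ≤ 1 / (s : ℝ) ^ k := by
  have hs0 : (0 : ℝ) < s := by positivity
  have hs1 : (1 : ℝ) < s := by exact_mod_cast by omega
  have hr0 : (0 : ℝ) ≤ 1 / s := by positivity
  have hr1 : (1 : ℝ) / s < 1 := by rw [div_lt_one hs0]; exact hs1
  have hgeo : HasSum (fun n : ℕ => (((s : ℝ) - 1) / (s : ℝ) ^ (k + 1)) * ((1 : ℝ) / s) ^ n)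
      ((((s : ℝ) - 1) / (s : ℝ) ^ (k + 1)) * ((1 : ℝ) - 1 / s)⁻¹) :=
    (hasSum_geometric_of_lt_one hr0 hr1).mul_left _
  have hval : (((s : ℝ) - 1) / (s : ℝ) ^ (k + 1)) * ((1 : ℝ) - 1 / s)⁻¹ = 1 / (s : ℝ) ^ k := by
    have h1 : (1 : ℝ) - 1 / s = ((s : ℝ) - 1) / s := by field_simp
    rw [h1]
    rw [inv_div, div_mul_div_comm,
      div_eq_div_iff
        (mul_ne_zero (by positivity) (sub_ne_zero.2 hs1.ne') :
          (s:ℝ) ^ (k+1) * ((s:ℝ) - 1) ≠ 0)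
        (by positivity : ((s:ℝ) ^ k) ≠ 0)]
    ring
  rw [hval] at hgeo
  have hb : ∀ n : ℕ, ‖c (n + k) / (s : ℝ) ^ (n + k + 1)‖
      ≤ (((s : ℝ) - 1) / (s : ℝ) ^ (k + 1)) * ((1 : ℝ) / s) ^ n := by
    intro n
    rw [term_eq hs, Real.norm_eq_abs, abs_div,
      abs_of_pos (show (0:ℝ) < (s:ℝ) ^ (n+k+1) by positivity)]
    gcongr
    exact hc (n + k)
  simpa [Real.norm_eq_abs] using tsum_of_norm_bounded hgeo hb


lemma dig_abs_le (hs : 2 ≤ s) (x : ℝ) (n : ℕ) : |(dig s x n : ℝ)| ≤ (s : ℝ) - 1 := by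
  rw [abs_of_nonneg (by positivity)]
  have := dig_le hs x n
  have h1 : (dig s x n : ℝ) ≤ ((s - 1 : ℕ) : ℝ) := by exact_mod_cast this
  have h2 : ((s - 1 : ℕ) : ℝ) = (s : ℝ) - 1 := by
    have : (1:ℕ) ≤ s := by omega
    push_cast [this]
    ring
  linarith

lemma tendsto_inv_pow (hs : 2 ≤ s) :
    Filter.Tendsto (fun k : ℕ => 1 / (s : ℝ) ^ k) Filter.atTop (nhds 0) := by
  have hs0 : (0 : ℝ) < s := by positivity
  have hr0 : (0 : ℝ) ≤ 1 / s := by positivity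
  have hr1 : (1 : ℝ) / s < 1 := by
    rw [div_lt_one hs0]; exact_mod_cast by omega
  have := tendsto_pow_atTop_nhds_zero_of_lt_one hr0 hr1
  convert this using 2 with k
  rw [div_pow, one_pow]

lemma floor_pow_div_tendsto (hs : 2 ≤ s) {x : ℝ} :
    Filter.Tendsto (fun k : ℕ => (⌊(s : ℝ) ^ k * x⌋ : ℝ) / (s : ℝ) ^ k)
      Filter.atTop (nhds x) := by
  have hs0 : (0 : ℝ) < s := by positivity
  have hb : ∀ k : ℕ, x - 1 / (s : ℝ) ^ k < (⌊(s : ℝ) ^ k * x⌋ : ℝ) / (s : ℝ) ^ k ∧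
      (⌊(s : ℝ) ^ k * x⌋ : ℝ) / (s : ℝ) ^ k ≤ x := by
    intro k
    have hp : (0 : ℝ) < (s : ℝ) ^ k := by positivity
    constructor
    · rw [lt_div_iff₀ hp]
      have := Int.lt_floor_add_one ((s : ℝ) ^ k * x)
      have h2 : (s : ℝ) ^ k * x - 1 < (⌊(s : ℝ) ^ k * x⌋ : ℝ) := by linarith
      calc (x - 1 / (s : ℝ) ^ k) * (s : ℝ) ^ k = (s : ℝ) ^ k * x - 1 := by field_simp
        _ < _ := h2
    · rw [div_le_iff₀ hp]
      have := Int.floor_le ((s : ℝ) ^ k * x)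
      linarith
  have h1 : Filter.Tendsto (fun k : ℕ => x - 1 / (s : ℝ) ^ k) Filter.atTop (nhds x) := by
    have := (tendsto_inv_pow hs).const_sub x
    simpa using this
  exact tendsto_of_tendsto_of_tendsto_of_le_of_le h1 tendsto_const_nhds
    (fun k => (hb k).1.le) (fun k => (hb k).2)

lemma summable_dig (hs : 2 ≤ s) (x : ℝ) :
    Summable fun n => (dig s x n : ℝ) / (s : ℝ) ^ (n + 1) :=
  summable_aux hs _ (dig_abs_le hs x)

lemma tsum_dig (hs : 2 ≤ s) {x : ℝ} (hx : x ∈ Set.Ico (0 : ℝ) 1) :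
    ∑' n : ℕ, (dig s x n : ℝ) / (s : ℝ) ^ (n + 1) = x := by
  have hfl : ⌊x⌋ = 0 := Int.floor_eq_zero_iff.2 hx
  have hsum := summable_dig hs x
  have h1 := hsum.hasSum.tendsto_sum_nat
  have h2 : Filter.Tendsto (fun k => ∑ n ∈ Finset.range k, (dig s x n : ℝ) / (s : ℝ) ^ (n + 1))
      Filter.atTop (nhds x) := by
    have := floor_pow_div_tendsto hs (x := x)
    refine this.congr fun k => ?_
    rw [dig_partial_sum hs, hfl]
    norm_num
  exact tendsto_nhds_unique h1 h2

lemma dig_admissible (hs : 2 ≤ s) {x : ℝ} (hx : x ∈ Set.Ico (0 : ℝ) 1) :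
    ¬ ∃ N, ∀ n ≥ N, dig s x n = s - 1 := by
  rintro ⟨N, hN⟩
  have hs0 : (0 : ℝ) < s := by positivity
  have hfl : ⌊x⌋ = 0 := Int.floor_eq_zero_iff.2 hx
  set c : ℝ := (⌊(s : ℝ) ^ N * x⌋ : ℝ) / (s : ℝ) ^ N with hc
  have claim : ∀ k, N ≤ k → (⌊(s : ℝ) ^ k * x⌋ : ℝ) / (s : ℝ) ^ k
      = c + 1 / (s : ℝ) ^ N - 1 / (s : ℝ) ^ k := by
    intro k hk
    induction k, hk using Nat.le_induction with
    | base => simp [hc]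
    | succ k hk ih =>
      have e1 : (⌊(s : ℝ) ^ (k+1) * x⌋ : ℝ) / (s : ℝ) ^ (k+1)
          = (⌊(s : ℝ) ^ k * x⌋ : ℝ) / (s : ℝ) ^ k + (dig s x k : ℝ) / (s : ℝ) ^ (k + 1) := by
        have p1 := dig_partial_sum hs x (k+1)
        have p2 := dig_partial_sum hs x k
        rw [Finset.sum_range_succ, p2] at p1
        rw [hfl] at p1 p2
        push_cast at p1 ⊢
        linarith
      have e2 : (dig s x k : ℝ) = (s : ℝ) - 1 := by
        rw [hN k hk]
        have : (1:ℕ) ≤ s := by omega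
        push_cast [this]
        ring
      rw [e1, ih, e2]
      have hp : ((s : ℝ)) ^ (k+1) ≠ 0 := by positivity
      have hpk : ((s : ℝ)) ^ k ≠ 0 := by positivity
      field_simp
      ring
  have hub : c + 1 / (s : ℝ) ^ N ≤ x := by
    have hev : ∀ᶠ k in Filter.atTop, c + 1 / (s : ℝ) ^ N ≤ x + 1 / (s : ℝ) ^ k := by
      filter_upwards [Filter.eventually_ge_atTop N] with k hk
      have h1 := claim k hk
      have h2 : (⌊(s : ℝ) ^ k * x⌋ : ℝ) / (s : ℝ) ^ k ≤ x := by
        rw [div_le_iff₀ (by positivity)]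
        have := Int.floor_le ((s : ℝ) ^ k * x)
        linarith
      linarith
    have hlim : Filter.Tendsto (fun k : ℕ => x + 1 / (s : ℝ) ^ k) Filter.atTop (nhds x) := by
      have := (tendsto_inv_pow hs).const_add x
      simpa using this
    exact ge_of_tendsto hlim hev
  have hlt : x < c + 1 / (s : ℝ) ^ N := by
    have := Int.lt_floor_add_one ((s : ℝ) ^ N * x)
    rw [hc]
    have hp : (0 : ℝ) < (s : ℝ) ^ N := by positivity
    rw [← add_div, lt_div_iff₀ hp]
    linarith
  linarith

lemma floor_div_nat' (y : ℝ) (c : ℕ) (hc : 0 < c) : ⌊y / (c : ℝ)⌋ = ⌊y⌋ / (c : ℤ) := by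
  have hc0 : (0 : ℝ) < c := by exact_mod_cast hc
  have hcz : (0 : ℤ) < (c : ℤ) := by exact_mod_cast hc
  have h1 := Int.mul_ediv_add_emod ⌊y⌋ (c : ℤ)
  have h2 : 0 ≤ ⌊y⌋ % (c : ℤ) := Int.emod_nonneg _ hcz.ne'
  have h3 : ⌊y⌋ % (c : ℤ) < c := Int.emod_lt_of_pos _ hcz
  have hfle := Int.floor_le y
  have hflt := Int.lt_floor_add_one y
  have h1' := congrArg (fun z : ℤ => (z : ℝ)) h1
  push_cast at h1'
  have h2' : (0 : ℝ) ≤ ((⌊y⌋ % (c : ℤ) : ℤ) : ℝ) := by exact_mod_cast h2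
  have h3' : ((⌊y⌋ % (c : ℤ) : ℤ) : ℝ) < (c : ℝ) := by exact_mod_cast h3
  rw [Int.floor_eq_iff]
  constructor
  · rw [le_div_iff₀ hc0]
    push_cast
    nlinarith [h1', h2']
  · rw [div_lt_iff₀ hc0]
    push_cast
    have h4 : ((⌊y⌋ % (c : ℤ) : ℤ) : ℝ) + 1 ≤ (c : ℝ) := by exact_mod_cast h3
    nlinarith [h1', h4]

lemma floor_pow_det (hs : 2 ≤ s) (x x' : ℝ) {n k : ℕ} (hn : n ≤ k)
    (h : ⌊(s : ℝ) ^ k * x⌋ = ⌊(s : ℝ) ^ k * x'⌋) : ⌊(s : ℝ) ^ n * x⌋ = ⌊(s : ℝ) ^ n * x'⌋ := by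
  have hs0 : (0 : ℝ) < s := by positivity
  have hc : 0 < s ^ (k - n) := by positivity
  have key : ∀ y : ℝ, (s : ℝ) ^ n * y = ((s : ℝ) ^ k * y) / ((s ^ (k - n) : ℕ) : ℝ) := by
    intro y
    have : (s : ℝ) ^ k = (s : ℝ) ^ n * (s : ℝ) ^ (k - n) := by
      rw [← pow_add]
      congr 1
      omega
    push_cast
    rw [this]
    field_simp
  rw [key x, key x', floor_div_nat' _ _ hc, floor_div_nat' _ _ hc, h]

lemma dig_det (hs : 2 ≤ s) (x x' : ℝ) {n k : ℕ} (hn : n < k)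
    (h : ⌊(s : ℝ) ^ k * x⌋ = ⌊(s : ℝ) ^ k * x'⌋) : dig s x n = dig s x' n := by
  rw [dig, dig, floor_pow_det hs x x' (by omega : n + 1 ≤ k) h,
    floor_pow_det hs x x' (by omega : n ≤ k) h]


lemma signed_abs_le (hs : 2 ≤ s) (x : ℝ) (n : ℕ) :
    |(-1 : ℝ) ^ (n + 1) * (dig s x n : ℝ)| ≤ (s : ℝ) - 1 := by
  rw [abs_mul, abs_pow, abs_neg, abs_one, one_pow, one_mul]
  exact dig_abs_le hs x n

lemma g_eq (hs : 2 ≤ s) (g : ℝ → ℝ)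
    (hg : ∀ a : ℕ → ℕ, (∀ n, a n ≤ s - 1) → (¬ ∃ N, ∀ n ≥ N, a n = s - 1) →
      g (∑' n : ℕ, (a n : ℝ) / (s : ℝ) ^ (n + 1)) =
        ∑' n : ℕ, (-1 : ℝ) ^ (n + 1) * (a n : ℝ) / (s : ℝ) ^ (n + 1))
    {x : ℝ} (hx : x ∈ Set.Ico (0 : ℝ) 1) :
    g x = ∑' n : ℕ, (-1 : ℝ) ^ (n + 1) * (dig s x n : ℝ) / (s : ℝ) ^ (n + 1) := by
  have := hg (dig s x) (fun n => dig_le hs x n) (dig_admissible hs hx)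
  rwa [tsum_dig hs hx] at this

lemma g_dist (hs : 2 ≤ s) (g : ℝ → ℝ)
    (hg : ∀ a : ℕ → ℕ, (∀ n, a n ≤ s - 1) → (¬ ∃ N, ∀ n ≥ N, a n = s - 1) →
      g (∑' n : ℕ, (a n : ℝ) / (s : ℝ) ^ (n + 1)) =
        ∑' n : ℕ, (-1 : ℝ) ^ (n + 1) * (a n : ℝ) / (s : ℝ) ^ (n + 1))
    {x x' : ℝ} (hx : x ∈ Set.Ico (0 : ℝ) 1) (hx' : x' ∈ Set.Ico (0 : ℝ) 1) (k : ℕ)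
    (h : ⌊(s : ℝ) ^ k * x⌋ = ⌊(s : ℝ) ^ k * x'⌋) :
    |g x - g x'| ≤ 2 / (s : ℝ) ^ k := by
  rw [g_eq hs g hg hx, g_eq hs g hg hx']
  have hsx := summable_aux hs (fun n => (-1 : ℝ) ^ (n + 1) * (dig s x n : ℝ))
    (signed_abs_le hs x)
  have hsx' := summable_aux hs (fun n => (-1 : ℝ) ^ (n + 1) * (dig s x' n : ℝ))
    (signed_abs_le hs x')
  have e1 := hsx.sum_add_tsum_nat_add k
  have e2 := hsx'.sum_add_tsum_nat_add k
  have hhead : ∑ n ∈ Finset.range k, (-1 : ℝ) ^ (n + 1) * (dig s x n : ℝ) / (s : ℝ) ^ (n + 1)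
      = ∑ n ∈ Finset.range k, (-1 : ℝ) ^ (n + 1) * (dig s x' n : ℝ) / (s : ℝ) ^ (n + 1) := by
    refine Finset.sum_congr rfl fun n hn => ?_
    rw [dig_det hs x x' (Finset.mem_range.1 hn) h]
  have t1 := tail_bound hs (fun n => (-1 : ℝ) ^ (n + 1) * (dig s x n : ℝ))
    (signed_abs_le hs x) k
  have t2 := tail_bound hs (fun n => (-1 : ℝ) ^ (n + 1) * (dig s x' n : ℝ))
    (signed_abs_le hs x') k
  rw [← e1, ← e2, hhead, add_sub_add_left_eq_sub]
  have htri := abs_sub (∑' n : ℕ, (-1 : ℝ) ^ (n + k + 1) * (dig s x (n + k) : ℝ) / (s : ℝ) ^ (n + k + 1))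
    (∑' n : ℕ, (-1 : ℝ) ^ (n + k + 1) * (dig s x' (n + k) : ℝ) / (s : ℝ) ^ (n + k + 1))
  exact htri.trans ((add_le_add t1 t2).trans (le_of_eq (by ring)))

lemma x_dist (hs : 2 ≤ s) {x x' : ℝ} (k : ℕ)
    (h : ⌊(s : ℝ) ^ k * x⌋ = ⌊(s : ℝ) ^ k * x'⌋) : |x - x'| ≤ 2 / (s : ℝ) ^ k := by
  have hp : (0 : ℝ) < (s : ℝ) ^ k := by positivity
  have f1 := Int.floor_le ((s : ℝ) ^ k * x)
  have f2 := Int.lt_floor_add_one ((s : ℝ) ^ k * x)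
  have f3 := Int.floor_le ((s : ℝ) ^ k * x')
  have f4 := Int.lt_floor_add_one ((s : ℝ) ^ k * x')
  rw [h] at f1 f2
  have habs : |(s : ℝ) ^ k * x - (s : ℝ) ^ k * x'| ≤ 2 := by
    rw [abs_le]
    constructor <;> nlinarith
  have e : (s : ℝ) ^ k * |x - x'| = |(s : ℝ) ^ k * x - (s : ℝ) ^ k * x'| := by
    rw [← mul_sub, abs_mul, abs_of_pos hp]
  rw [le_div_iff₀ hp, mul_comm, e]
  exact habs

lemma calc_bound (hs : 2 ≤ s) {dd : ℝ} (hd : 1 < dd) :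
    Filter.Tendsto (fun k : ℕ => (s : ℝ) ^ k * (2 / (s : ℝ) ^ k) ^ dd)
      Filter.atTop (nhds 0) := by
  have hs0 : (0 : ℝ) < s := by positivity
  have hs1 : (1 : ℝ) < s := by exact_mod_cast by omega
  set ρ : ℝ := (s : ℝ) ^ ((1 : ℝ) - dd) with hρ
  have hρ0 : 0 ≤ ρ := Real.rpow_nonneg hs0.le _
  have hρ1 : ρ < 1 := Real.rpow_lt_one_of_one_lt_of_neg hs1 (by linarith)
  have hT : Filter.Tendsto (fun k : ℕ => (2 : ℝ) ^ dd * ρ ^ k) Filter.atTop (nhds 0) := by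
    have := (tendsto_pow_atTop_nhds_zero_of_lt_one hρ0 hρ1).const_mul ((2 : ℝ) ^ dd)
    simpa using this
  refine hT.congr fun k => ?_
  have hsk : (0 : ℝ) < (s : ℝ) ^ k := by positivity
  have h1 : (2 / (s : ℝ) ^ k) ^ dd = 2 ^ dd / ((s : ℝ) ^ (k : ℝ)) ^ dd := by
    rw [Real.div_rpow (by norm_num : (0:ℝ) ≤ 2) hsk.le, Real.rpow_natCast]
  have h2 : ((s : ℝ) ^ (k : ℝ)) ^ dd = (s : ℝ) ^ ((k : ℝ) * dd) :=
    (Real.rpow_mul hs0.le (k : ℝ) dd).symm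
  have h3 : ρ ^ k = (s : ℝ) ^ (((1 : ℝ) - dd) * (k : ℝ)) := by
    rw [← Real.rpow_natCast ρ k, hρ, ← Real.rpow_mul hs0.le]
  rw [h1, h2, h3,
    show ((s : ℝ) ^ k : ℝ) = (s : ℝ) ^ (k : ℝ) from (Real.rpow_natCast _ k).symm,
    div_eq_mul_inv, ← Real.rpow_neg hs0.le,
    show (s : ℝ) ^ (k : ℝ) * ((2:ℝ) ^ dd * (s : ℝ) ^ (-((k : ℝ) * dd)))
      = 2 ^ dd * ((s : ℝ) ^ (k : ℝ) * (s : ℝ) ^ (-((k : ℝ) * dd))) from by ring,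
    ← Real.rpow_add hs0]
  congr 1
  ring

end Stmt16Aux

open Stmt16Aux MeasureTheory in
/-- Paper's Theorem 3 for the function `f₊`: the graph of `f₊` over `[0,1)` has
Hausdorff dimension `1`. -/
theorem stmt_16 (s : ℕ) (hs : 2 ≤ s) (g : ℝ → ℝ)
    (hg : ∀ a : ℕ → ℕ, (∀ n, a n ≤ s - 1) → (¬ ∃ N, ∀ n ≥ N, a n = s - 1) →
      g (∑' n : ℕ, (a n : ℝ) / (s : ℝ) ^ (n + 1)) =
        ∑' n : ℕ, (-1 : ℝ) ^ (n + 1) * (a n : ℝ) / (s : ℝ) ^ (n + 1)) :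
    dimH {p : ℝ × ℝ | ∃ x ∈ Set.Ico (0 : ℝ) 1, p = (x, g x)} = 1 := by
  set G : Set (ℝ × ℝ) := {p : ℝ × ℝ | ∃ x ∈ Set.Ico (0 : ℝ) 1, p = (x, g x)} with hGdef
  have hs0 : (0 : ℝ) < s := by positivity
  -- lower bound
  have hG1 : Prod.fst '' G = Set.Ico (0 : ℝ) 1 := by
    ext u
    constructor
    · rintro ⟨p, ⟨x, hx, rfl⟩, rfl⟩
      exact hx
    · intro hu
      exact ⟨(u, g u), ⟨u, hu, rfl⟩, rfl⟩
  have hdim_Ico : dimH (Set.Ico (0 : ℝ) 1) = 1 := by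
    rw [Real.dimH_of_mem_nhds (Ico_mem_nhds (by norm_num : (0:ℝ) < 1/2) (by norm_num))]
    simp
  have hlow : 1 ≤ dimH G := by
    rw [← hdim_Ico, ← hG1]
    exact LipschitzWith.prod_fst.dimH_image_le G
  refine le_antisymm ?_ hlow
  -- upper bound
  by_contra hlt
  rw [not_le] at hlt
  obtain ⟨d, hd1, hdG⟩ := ENNReal.lt_iff_exists_nnreal_btwn.1 hlt
  have hd1' : (1 : ℝ) < (d : ℝ) := by exact_mod_cast hd1
  have hd0 : (0 : ℝ) ≤ (d : ℝ) := d.2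
  -- the covering sets
  set t : ∀ k : ℕ, Fin (s ^ k) → Set (ℝ × ℝ) :=
    fun k j => {p : ℝ × ℝ | p ∈ G ∧ ⌊(s : ℝ) ^ k * p.1⌋ = ((j : ℕ) : ℤ)} with htdef
  set r : ℕ → ℝ≥0∞ := fun k => ENNReal.ofReal (2 / (s : ℝ) ^ k) with hrdef
  have hr : Filter.Tendsto r Filter.atTop (nhds 0) := by
    have h2 : Filter.Tendsto (fun k : ℕ => 2 / (s : ℝ) ^ k) Filter.atTop (nhds 0) := by
      have := (tendsto_inv_pow hs).const_mul (2 : ℝ)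
      simpa [mul_one_div, div_eq_mul_inv] using this
    have := ENNReal.tendsto_ofReal h2
    simpa using this
  have ht : ∀ k : ℕ, ∀ j : Fin (s ^ k), EMetric.diam (t k j) ≤ r k := by
    intro k j
    apply EMetric.diam_le
    rintro p ⟨⟨x, hx, rfl⟩, hpf⟩ q ⟨⟨x', hx', rfl⟩, hqf⟩
    rw [edist_dist]
    apply ENNReal.ofReal_le_ofReal
    have hff : ⌊(s : ℝ) ^ k * x⌋ = ⌊(s : ℝ) ^ k * x'⌋ := hpf.trans hqf.symm
    rw [Prod.dist_eq]
    apply max_le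
    · rw [Real.dist_eq]
      exact x_dist hs k hff
    · rw [Real.dist_eq]
      exact g_dist hs g hg hx hx' k hff
  have hst : ∀ k : ℕ, G ⊆ ⋃ j : Fin (s ^ k), t k j := by
    intro k p hp
    obtain ⟨x, hx, rfl⟩ := hp
    have hx0 : (0 : ℝ) ≤ (s : ℝ) ^ k * x := mul_nonneg (by positivity) hx.1
    have h0 : 0 ≤ ⌊(s : ℝ) ^ k * x⌋ := Int.floor_nonneg.2 hx0
    have h1 : ⌊(s : ℝ) ^ k * x⌋ < ((s ^ k : ℕ) : ℤ) := by
      apply Int.floor_lt.2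
      push_cast
      calc (s : ℝ) ^ k * x < (s : ℝ) ^ k * 1 := by
            apply mul_lt_mul_of_pos_left hx.2 (by positivity)
        _ = (s : ℝ) ^ k := mul_one _
    have hlt' : (⌊(s : ℝ) ^ k * x⌋).toNat < s ^ k := by
      generalize hm : s ^ k = m at h1 ⊢
      omega
    refine Set.mem_iUnion.2 ⟨⟨(⌊(s : ℝ) ^ k * x⌋).toNat, hlt'⟩, ⟨⟨x, hx, rfl⟩, ?_⟩⟩
    simp [Int.toNat_of_nonneg h0]
  have key := MeasureTheory.Measure.hausdorffMeasure_le_liminf_sum (d : ℝ) G r hr t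
      (Filter.Eventually.of_forall ht) (Filter.Eventually.of_forall hst)
  -- bound the sums
  set b : ℕ → ℝ≥0∞ := fun k => ((s ^ k : ℕ) : ℝ≥0∞) * (r k) ^ (d : ℝ) with hbdef
  have hsum_le : ∀ k : ℕ, ∑ j : Fin (s ^ k), (EMetric.diam (t k j)) ^ (d : ℝ) ≤ b k := by
    intro k
    calc ∑ j : Fin (s ^ k), (EMetric.diam (t k j)) ^ (d : ℝ)
        ≤ ∑ _j : Fin (s ^ k), (r k) ^ (d : ℝ) :=
          Finset.sum_le_sum fun j _ => ENNReal.rpow_le_rpow (ht k j) hd0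
      _ = ((s ^ k : ℕ) : ℝ≥0∞) * (r k) ^ (d : ℝ) := by
          simp [Finset.sum_const, nsmul_eq_mul]
  have hblim : Filter.Tendsto b Filter.atTop (nhds 0) := by
    have hreal := calc_bound hs hd1'
    have hbe : ∀ k : ℕ, b k = ENNReal.ofReal ((s : ℝ) ^ k * (2 / (s : ℝ) ^ k) ^ (d : ℝ)) := by
      intro k
      rw [hbdef]
      simp only
      rw [ENNReal.ofReal_rpow_of_pos (show (0:ℝ) < 2 / (s:ℝ)^k by positivity),
        ← ENNReal.ofReal_natCast (s ^ k), ← ENNReal.ofReal_mul (by positivity)]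
      congr 1
      push_cast
      ring
    have := ENNReal.tendsto_ofReal hreal
    rw [ENNReal.ofReal_zero] at this
    exact Filter.Tendsto.congr (fun k => (hbe k).symm) this
  have hliminf : Filter.liminf (fun k => ∑ j : Fin (s ^ k), (EMetric.diam (t k j)) ^ (d : ℝ))
      Filter.atTop ≤ 0 := by
    have h1 : Filter.liminf (fun k => ∑ j : Fin (s ^ k), (EMetric.diam (t k j)) ^ (d : ℝ))
        Filter.atTop ≤ Filter.liminf b Filter.atTop :=
      Filter.liminf_le_liminf (Filter.Eventually.of_forall hsum_le)
    rwa [hblim.liminf_eq] at h1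
  have hzero : μH[(d : ℝ)] G = 0 := le_antisymm (key.trans hliminf) (zero_le')
  have hle : dimH G ≤ (d : ℝ≥0∞) :=
    dimH_le_of_hausdorffMeasure_ne_top (by rw [hzero]; exact ENNReal.zero_ne_top)
  exact absurd hdG (not_lt.2 hle)
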